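/- Let L be a real Lie algebra and ρ a representation of L on a real vector space V such that the only invariant vector is zero (ρ(x)v = 0 for all x ∈ L implies v = 0). Let γ₀, γ₀' be 1-cocycles of ρ and let c = {γ₀ + ∂v : v ∈ V}, c' = {γ₀' + ∂v : v ∈ V} be their cohomology classes, each an affine space modeled on V via v acting by γ ↦ γ + ∂v. Then a map f : c → c' is an affine equivariant map — i.e. there is a linear F : V → V with f(γ + ∂v) = f(γ) + ∂(F(v)) for all γ ∈ c, v ∈ V, and f(γ)(x) = F(γ(x)) for all γ ∈ c, x ∈ L — if and only if there exists a linear map T : V → V commuting with ρ(x) for every x ∈ L such that f(γ) = T ∘ γ for all γ ∈ c. -/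
import Mathlib


/-- Let `ρ` be a representation of `L` on `V` with no nonzero invariant vector,
and let `c`, `c'` be the cohomology classes of the 1-cocycles `γ₀`, `γ₀'`, each an affine
space modeled on `V` via `γ ↦ γ + ∂v`. A map `f : c → c'` is an affine equivariant map iff
it is of the form `γ ↦ T ∘ γ` for some linear `T : V → V` commuting with `ρ`. -/
theorem affine_equivariant_maps_between_cohomology_classes
    {L : Type*} [LieRing L] [LieAlgebra ℝ L]
    {V : Type*} [AddCommGroup V] [Module ℝ V]
    (ρ : L →ₗ[ℝ] V →ₗ[ℝ] V)
    (hρ : ∀ x y : L, ρ ⁅x, y⁆ = ρ x ∘ₗ ρ y - ρ y ∘ₗ ρ x)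
    (hinv : ∀ v : V, (∀ x : L, ρ x v = 0) → v = 0)
    (γ₀ γ₀' : L →ₗ[ℝ] V)
    (hγ₀ : ∀ x y : L, γ₀ ⁅x, y⁆ = ρ x (γ₀ y) - ρ y (γ₀ x))
    (hγ₀' : ∀ x y : L, γ₀' ⁅x, y⁆ = ρ x (γ₀' y) - ρ y (γ₀' x))
    (c c' : Set (L →ₗ[ℝ] V))
    (hc : c = {γ | ∃ v : V, γ = γ₀ + ρ.flip v})
    (hc' : c' = {γ | ∃ v : V, γ = γ₀' + ρ.flip v})
    (f : c → c') :
    (∃ F : V →ₗ[ℝ] V,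
        (∀ (g₁ g₂ : c) (v : V),
            (g₂ : L →ₗ[ℝ] V) = (g₁ : L →ₗ[ℝ] V) + ρ.flip v →
            (f g₂ : L →ₗ[ℝ] V) = (f g₁ : L →ₗ[ℝ] V) + ρ.flip (F v)) ∧
        (∀ (g : c) (x : L), (f g : L →ₗ[ℝ] V) x = F ((g : L →ₗ[ℝ] V) x)))
      ↔ (∃ T : V →ₗ[ℝ] V,
          (∀ x : L, T ∘ₗ ρ x = ρ x ∘ₗ T) ∧
          ∀ g : c, (f g : L →ₗ[ℝ] V) = T ∘ₗ (g : L →ₗ[ℝ] V)) := by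

  constructor
  · rintro ⟨F, h1, h2⟩
    refine ⟨F, ?_, fun g => by ext x; exact h2 g x⟩
    intro x
    ext v
    have hg1 : γ₀ ∈ c := by rw [hc]; exact ⟨0, by simp⟩
    have hg2 : γ₀ + ρ.flip v ∈ c := by rw [hc]; exact ⟨v, rfl⟩
    have key := h1 ⟨γ₀, hg1⟩ ⟨γ₀ + ρ.flip v, hg2⟩ v rfl
    have key' := congrArg (fun (h : L →ₗ[ℝ] V) => h x) key
    have e1 := h2 ⟨γ₀, hg1⟩ x
    have e2 := h2 ⟨γ₀ + ρ.flip v, hg2⟩ x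
    simp only [LinearMap.add_apply, LinearMap.flip_apply] at key' e2
    rw [e1, e2, map_add] at key'
    simpa using key'
  · rintro ⟨T, hT, hTf⟩
    refine ⟨T, ?_, fun g x => by rw [hTf g]; rfl⟩
    intro g₁ g₂ v hv
    rw [hTf g₂, hTf g₁, hv]
    ext x
    have := congrArg (fun (h : V →ₗ[ℝ] V) => h v) (hT x)
    simp only [LinearMap.comp_apply] at this ⊢
    simp [LinearMap.flip_apply, this]
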